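/- (Proposition: expansion of τ and F for pure solitons.) In the pure-soliton setup with spectral parameters p_i = p_{i,1}, q_i = p_{i,2} (q_i ≠ p_j for all i,j), data ξ_i ∈ ℝ^m, η_i ∈ (ℝⁿ)ᵀ, and K an n×m real matrix, define w_{ij} = ((q_j−p_j)/(q_i−p_j)) η_i K ξ_j, the N×N matrix valued function Ω with entries Ω_{ij}(x,y,t) = δ_{ij} + w_{ij} e^{ϑ(p_j) − ϑ(q_i)}, the m×N matrix θ₁ with j-th column (q_j−p_j)ξ_j, the N×n matrix χ₁ with i-th row η_i, τ = e^{ϑ_{(2,…,2)}} det Ω, and F = − e^{ϑ_{(2,…,2)}} θ₁ diag(e^{ϑ(p_1)},…,e^{ϑ(p_N)}) adj(Ω) diag(e^{−ϑ(q_1)},…,e^{−ϑ(q_N)}) χ₁, where adj denotes the adjugate matrix. Then there exist constants μ_I ∈ ℝ and constant m×n matrices M_I, for I ∈ {1,2}^N, such that τ = Σ_{I∈{1,2}^N} μ_I e^{ϑ_I} and F = Σ_{I∈{1,2}^N} M_I e^{ϑ_I} as functions on ℝ³, with μ_{(2,…,2)} = 1 and M_{(2,…,2)} = 0. -/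

import Mathlib

open Matrix

/-- `ϑ(p) = x p + y p² + t p³`. -/
noncomputable def th (p x y t : ℝ) : ℝ := x * p + y * p ^ 2 + t * p ^ 3

lemma detExpand' {N : ℕ} (c : Fin N → Fin 2 → ℝ) (v : Fin N → Fin 2 → (Fin N → ℝ)) :
    (Matrix.of fun k => ∑ a : Fin 2, c k a • v k a).det
      = ∑ I : Fin N → Fin 2, (∏ k, c k (I k)) * (Matrix.of fun k => v k (I k)).det := by
  classical
  let f := (Matrix.detRowAlternating : (Fin N → ℝ) [⋀^Fin N]→ₗ[ℝ] ℝ).toMultilinearMap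
  have h1 : (Matrix.of fun k => ∑ a : Fin 2, c k a • v k a).det
      = f (fun k => ∑ a : Fin 2, c k a • v k a) := rfl
  rw [h1, f.map_sum]
  refine Finset.sum_congr rfl fun I _ => ?_
  rw [f.map_smul_univ (fun k => c k (I k)) (fun k => v k (I k)), smul_eq_mul]
  rfl


/-- Expansion of `τ` and `F` for pure soliton solutions: both are linear combinations of
the exponentials `e^{ϑ_I}`, `I ∈ {1,2}^N`, with `μ_{(2,…,2)} = 1` and `M_{(2,…,2)} = 0`.
Here labels `1, 2` are encoded as `0, 1 : Fin 2`, with `pa i 0 = p i` and `pa i 1 = q i`. -/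
theorem stmt_5 {m n N : ℕ} (K : Matrix (Fin n) (Fin m) ℝ)
    (p q : Fin N → ℝ) (hpq : ∀ i j, q i ≠ p j)
    (ξ : Fin N → Fin m → ℝ) (η : Fin N → Fin n → ℝ)
    (pa : Fin N → Fin 2 → ℝ) (hpa : ∀ i, pa i 0 = p i ∧ pa i 1 = q i)
    (w : Fin N → Fin N → ℝ)
    (hw : ∀ i j, w i j = ((q j - p j) / (q i - p j)) * (η i ⬝ᵥ K.mulVec (ξ j)))
    (Ω : ℝ → ℝ → ℝ → Matrix (Fin N) (Fin N) ℝ)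
    (hΩ : ∀ x y t, Ω x y t = Matrix.of fun i j =>
      (if i = j then (1 : ℝ) else 0) + w i j * Real.exp (th (p j) x y t - th (q i) x y t))
    (θ₁ : Matrix (Fin m) (Fin N) ℝ) (hθ₁ : θ₁ = Matrix.of fun a j => (q j - p j) * ξ j a)
    (χ₁ : Matrix (Fin N) (Fin n) ℝ) (hχ₁ : χ₁ = Matrix.of fun i b => η i b)
    (τ : ℝ → ℝ → ℝ → ℝ)
    (hτ : ∀ x y t, τ x y t = Real.exp (∑ i, th (q i) x y t) * (Ω x y t).det)
    (F : ℝ → ℝ → ℝ → Matrix (Fin m) (Fin n) ℝ)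
    (hF : ∀ x y t, F x y t = -(Real.exp (∑ i, th (q i) x y t)) •
      (θ₁ * Matrix.diagonal (fun i => Real.exp (th (p i) x y t))
        * (Ω x y t).adjugate
        * Matrix.diagonal (fun i => Real.exp (-th (q i) x y t)) * χ₁)) :
    ∃ (μ : (Fin N → Fin 2) → ℝ) (M : (Fin N → Fin 2) → Matrix (Fin m) (Fin n) ℝ),
      μ (fun _ => 1) = 1 ∧ M (fun _ => 1) = 0 ∧
      (∀ x y t, τ x y t
        = ∑ I : Fin N → Fin 2, μ I * Real.exp (∑ i, th (pa i (I i)) x y t)) ∧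
      (∀ x y t, F x y t
        = ∑ I : Fin N → Fin 2, Real.exp (∑ i, th (pa i (I i)) x y t) • M I) := by
  classical
  set u : Fin N → Fin 2 → (Fin N → ℝ) :=
    fun j a => if a = 0 then (fun i => w i j) else Pi.single j 1 with hu
  set uF : Fin N → Fin N → Fin N → Fin 2 → (Fin N → ℝ) :=
    fun i j k a => if k = i then (if a = 0 then Pi.single j 1 else 0) else u k a with huF
  -- c and basic facts
  set c : ℝ → ℝ → ℝ → Fin N → Fin 2 → ℝ :=
    fun x y t k a => Real.exp (th (pa k a) x y t) with hc
  have hc0 : ∀ x y t k, c x y t k 0 = Real.exp (th (p k) x y t) := by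
    intro x y t k; rw [hc]; simp [(hpa k).1]
  have hc1 : ∀ x y t k, c x y t k 1 = Real.exp (th (q k) x y t) := by
    intro x y t k; rw [hc]; simp [(hpa k).2]
  have hcprod : ∀ x y t (I : Fin N → Fin 2),
      (∏ k, c x y t k (I k)) = Real.exp (∑ i, th (pa i (I i)) x y t) := by
    intro x y t I; rw [Real.exp_sum]
  -- the key matrix B (rows) and its transpose
  set B : ℝ → ℝ → ℝ → Matrix (Fin N) (Fin N) ℝ :=
    fun x y t => Matrix.of fun k => ∑ a : Fin 2, c x y t k a • u k a with hB
  have hBentry : ∀ x y t k i, B x y t k i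
      = Real.exp (th (q k) x y t) * (if i = k then 1 else 0)
        + Real.exp (th (p k) x y t) * w i k := by
    intro x y t k i
    rw [hB]
    show (∑ a : Fin 2, c x y t k a • u k a) i = _
    rw [Fin.sum_univ_two]
    simp only [Pi.add_apply, Pi.smul_apply, smul_eq_mul, hu]
    simp [hc0, hc1, Pi.single_apply]
    ring
  -- Ω in terms of B
  have hΩB : ∀ x y t, Ω x y t
      = Matrix.diagonal (fun i => Real.exp (-th (q i) x y t)) * (B x y t)ᵀ := by
    intro x y t
    ext i j
    simp only [hΩ, Matrix.of_apply, Matrix.diagonal_mul, Matrix.transpose_apply, hBentry]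
    by_cases hij : i = j
    · subst hij
      simp [Real.exp_sub, Real.exp_neg]
      field_simp
    · simp [hij, Real.exp_sub, Real.exp_neg]
      field_simp
  have hdetΩ : ∀ x y t, (Ω x y t).det
      = Real.exp (-∑ i, th (q i) x y t) * (B x y t).det := by
    intro x y t
    rw [hΩB, Matrix.det_mul, Matrix.det_diagonal, Matrix.det_transpose, ← Real.exp_sum]
    congr 1
    rw [← Finset.sum_neg_distrib]
  refine ⟨fun I => (Matrix.of fun k => u k (I k)).det,
    fun I => Matrix.of fun a b =>
      -∑ i, ∑ j, ((q i - p i) * ξ i a) * (Matrix.of fun k => uF i j k (I k)).det * η j b,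
    ?_, ?_, ?_, ?_⟩
  · have h1 : (Matrix.of fun k => u k ((fun _ => (1 : Fin 2)) k))
        = (1 : Matrix (Fin N) (Fin N) ℝ) := by
      ext k i
      simp [hu, Matrix.one_apply, Pi.single_apply, eq_comm]
    show (Matrix.of fun k => u k ((fun _ => (1 : Fin 2)) k)).det = 1
    rw [h1, Matrix.det_one]
  · ext a b
    simp only [Matrix.of_apply, Matrix.zero_apply, neg_eq_zero]
    refine Finset.sum_eq_zero fun i _ => Finset.sum_eq_zero fun j _ => ?_
    have h0 : (Matrix.of fun k => uF i j k ((fun _ => (1 : Fin 2)) k)).det = 0 := by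
      apply Matrix.det_eq_zero_of_row_eq_zero i
      intro l
      simp [huF]
    rw [h0]
    ring
  · intro x y t
    rw [hτ, hdetΩ, ← mul_assoc, ← Real.exp_add, add_neg_cancel, Real.exp_zero, one_mul]
    have hBdet : (B x y t).det
        = (Matrix.of fun k => ∑ a : Fin 2, c x y t k a • u k a).det := rfl
    rw [hBdet, detExpand']
    refine Finset.sum_congr rfl fun I _ => ?_
    rw [hcprod]
    ring
  · intro x y t
    set e : (Fin N → Fin 2) → ℝ := fun I => Real.exp (∑ k, th (pa k (I k)) x y t) with he
    set d : Fin N → Fin N → (Fin N → Fin 2) → ℝ :=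
      fun i j I => (Matrix.of fun k => uF i j k (I k)).det with hd
    have hadj : (Ω x y t).adjugate * Matrix.diagonal (fun i => Real.exp (-th (q i) x y t))
        = Real.exp (-∑ i, th (q i) x y t) • ((B x y t)ᵀ).adjugate := by
      rw [hΩB, Matrix.adjugate_mul_distrib, Matrix.mul_assoc, Matrix.adjugate_mul,
        Matrix.det_diagonal, Matrix.mul_smul, Matrix.mul_one]
      congr 1
      rw [← Real.exp_sum, ← Finset.sum_neg_distrib]
    have hFsimp : F x y t
        = -((θ₁ * Matrix.diagonal (fun i => Real.exp (th (p i) x y t))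
            * ((B x y t)ᵀ).adjugate) * χ₁) := by
      rw [hF, Matrix.mul_assoc (θ₁ * _) ((Ω x y t).adjugate), hadj, Matrix.mul_smul,
        Matrix.smul_mul, smul_smul, neg_mul, ← Real.exp_add, add_neg_cancel, Real.exp_zero,
        neg_smul, one_smul]
    have hkey : ∀ i j, Real.exp (th (p i) x y t) * ((B x y t)ᵀ).adjugate i j
        = ∑ I : Fin N → Fin 2, e I * d i j I := by
      intro i j
      rw [← Matrix.adjugate_transpose, Matrix.transpose_apply, Matrix.adjugate_apply,
        ← hc0 x y t i, ← Matrix.det_updateRow_smul]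
      have hupd : (B x y t).updateRow i (c x y t i 0 • (Pi.single j 1 : Fin N → ℝ))
          = Matrix.of fun k => ∑ a : Fin 2, c x y t k a • uF i j k a := by
        ext k l
        by_cases hk : k = i
        · subst hk
          rw [Matrix.updateRow_self]
          simp [huF, Fin.sum_univ_two]
        · rw [Matrix.updateRow_ne hk]
          simp [huF, hk, hB, Finset.sum_apply, Pi.smul_apply]
      rw [hupd, detExpand']
      exact Finset.sum_congr rfl fun I _ => by rw [hcprod, he, hd]
    ext a b
    rw [Matrix.sum_apply]
    have hL : F x y t a b = ∑ j, ∑ i,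
        -(θ₁ a i * (Real.exp (th (p i) x y t) * ((B x y t)ᵀ).adjugate i j) * η j b) := by
      rw [hFsimp, Matrix.neg_apply, Matrix.mul_apply, ← Finset.sum_neg_distrib]
      refine Finset.sum_congr rfl fun j _ => ?_
      rw [Matrix.mul_apply, Finset.sum_mul, ← Finset.sum_neg_distrib]
      refine Finset.sum_congr rfl fun i _ => ?_
      rw [Matrix.mul_diagonal, hχ₁]
      simp only [Matrix.of_apply]
      ring
    have hR : ∀ I : Fin N → Fin 2,
        (e I • (Matrix.of fun a b =>
            -∑ i, ∑ j, ((q i - p i) * ξ i a) * d i j I * η j b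
          : Matrix (Fin m) (Fin n) ℝ)) a b
        = ∑ i, ∑ j, -(θ₁ a i * (e I * d i j I) * η j b) := by
      intro I
      rw [Matrix.smul_apply, Matrix.of_apply, smul_eq_mul, mul_neg, Finset.mul_sum,
        ← Finset.sum_neg_distrib]
      refine Finset.sum_congr rfl fun i _ => ?_
      rw [Finset.mul_sum, ← Finset.sum_neg_distrib]
      refine Finset.sum_congr rfl fun j _ => ?_
      rw [hθ₁]
      simp only [Matrix.of_apply]
      ring
    calc F x y t a b
        = ∑ j, ∑ i, ∑ I : Fin N → Fin 2, -(θ₁ a i * (e I * d i j I) * η j b) := by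
          rw [hL]
          refine Finset.sum_congr rfl fun j _ => Finset.sum_congr rfl fun i _ => ?_
          rw [hkey i j, Finset.mul_sum, Finset.sum_mul, ← Finset.sum_neg_distrib]
      _ = ∑ i, ∑ j, ∑ I : Fin N → Fin 2, -(θ₁ a i * (e I * d i j I) * η j b) :=
          Finset.sum_comm
      _ = ∑ i, ∑ I : Fin N → Fin 2, ∑ j, -(θ₁ a i * (e I * d i j I) * η j b) :=
          Finset.sum_congr rfl fun i _ => Finset.sum_comm
      _ = ∑ I : Fin N → Fin 2, ∑ i, ∑ j, -(θ₁ a i * (e I * d i j I) * η j b) :=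
          Finset.sum_comm
      _ = ∑ I : Fin N → Fin 2,
            (e I • (Matrix.of fun a b =>
              -∑ i, ∑ j, ((q i - p i) * ξ i a) * d i j I * η j b
             : Matrix (Fin m) (Fin n) ℝ)) a b :=
          Finset.sum_congr rfl fun I _ => (hR I).symm
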